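/- arXiv:1310.1520 — 2 statements merged into one kernel-verified Lean document; each statement's English description precedes it below -/
import Mathlib

section
/- The number of 312-avoiding affine permutations in the affine symmetric group on d letters equals binomial(2d−1, d). -/
/-- An affine permutation in `S̃_d` is a bijection `π : ℤ → ℤ` with
`π (i + d) = π i + d` for all `i` and `Σ_{i=0}^{d-1} (π i - i) = 0`. -/
def IsAffinePerm (d : ℕ) (π : ℤ ≃ ℤ) : Prop :=
  (∀ i : ℤ, π (i + d) = π i + d) ∧ ∑ i ∈ Finset.range d, (π i - i) = 0

/-- A bijection `π : ℤ → ℤ` is 312-avoiding if there are no integers `i < j < k`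
with `π j < π k < π i`. -/
def Avoids312Z (π : ℤ ≃ ℤ) : Prop :=
  ¬ ∃ i j k : ℤ, i < j ∧ j < k ∧ π j < π k ∧ π k < π i

namespace CritesProof


/-! ### Generic sum helpers -/

lemma sum_range_eq_Ico' {M : Type*} [AddCommMonoid M] (d : ℕ) (g : ℤ → M) :
    ∑ i ∈ Finset.range d, g i = ∑ i ∈ Finset.Ico (0:ℤ) d, g i := by
  refine Finset.sum_nbij' (fun i => (i:ℤ)) (fun i => i.toNat) ?_ ?_ ?_ ?_ ?_
  · intro a ha; simp at ha ⊢; omega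
  · intro a ha; simp at ha ⊢; omega
  · intro a ha; simp
  · intro a ha; simp at ha ⊢; omega
  · intro a ha; rfl

lemma sum_Ico_shift' {M : Type*} [AddCommMonoid M] (f : ℤ → M) (a b s : ℤ) :
    ∑ i ∈ Finset.Ico a b, f (i + s) = ∑ i ∈ Finset.Ico (a+s) (b+s), f i := by
  refine Finset.sum_nbij' (fun i => i + s) (fun i => i - s) ?_ ?_ ?_ ?_ ?_
  · intro x hx; simp at hx ⊢; omega
  · intro x hx; simp at hx ⊢; omega
  · intro x hx; omega
  · intro x hx; omega
  · intro x hx; rfl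

lemma periodic_sum_Ico' {M : Type*} [AddCommMonoid M] (d : ℕ) (f : ℤ → M)
    (hf : ∀ k, f (k + d) = f k) (a b : ℤ) :
    ∑ i ∈ Finset.Ico a (a + d), f i = ∑ i ∈ Finset.Ico b (b + d), f i := by
  have key : ∀ c : ℤ, ∑ i ∈ Finset.Ico c (c + d), f i = ∑ i ∈ Finset.Ico (c+1) (c+1 + d), f i := by
    intro c
    rcases Nat.eq_zero_or_pos d with hd | hd
    · simp [hd]
    have h1 : Finset.Ico c (c + d) = insert c (Finset.Ico (c+1) (c + d)) := by
      ext x; simp [Finset.mem_Ico]; omega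
    have h2 : Finset.Ico (c+1) (c+1+d) = insert (c + d) (Finset.Ico (c+1) (c + d)) := by
      ext x; simp [Finset.mem_Ico]; omega
    rw [h1, h2, Finset.sum_insert (by simp), Finset.sum_insert (by simp)]
    have : f (c + d) = f c := hf c
    rw [this]
  have main : ∀ c : ℤ, ∑ i ∈ Finset.Ico c (c + d), f i = ∑ i ∈ Finset.Ico (0:ℤ) ((0:ℤ) + (d:ℤ)), f i := by
    intro c
    induction c using Int.induction_on with
    | zero => rfl
    | succ n ih => rw [← key n, ih]
    | pred n ih => rw [key (-n - 1)]; simpa using ih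
  rw [main a, main b]



section Construction

variable (d : ℕ) (e : ℤ → ℕ)

/-- the count `c k = #{t ∈ [1,d-1] : t ≤ e (k+t)}` -/
def cF (k : ℤ) : Finset ℕ := (Finset.Icc 1 (d-1)).filter (fun t => t ≤ e (k + t))

def cc (k : ℤ) : ℕ := (cF d e k).card

/-- the permutation built from a valid `e`. -/
def pp (k : ℤ) : ℤ := k + cc d e k - e k

variable {d e}
variable (hd : 1 ≤ d) (hper : ∀ k, e (k + d) = e k)
  (hval : ∀ (k : ℤ) (t : ℕ), 1 ≤ t → t ≤ e k → e (k - t) + t ≤ e k)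

include hd hper hval

lemma e_lt : ∀ k, e k < d := by
  intro k
  by_contra h
  push_neg at h
  have h2 := hval k d hd h
  have h3 : e (k - d) = e k := by
    have := hper (k - d); rw [show (k - d + d : ℤ) = k by ring] at this; omega
  omega

lemma cc_C1 (k : ℤ) (n : ℕ) (hn1 : 1 ≤ n) (hne : n ≤ e k) :
    cc d e k + 1 ≤ cc d e (k - n) ∧ pp d e k < pp d e (k - n) := by
  have helt : ∀ j, e j < d := e_lt hd hper hval
  have hi : ∃ i : ℤ, i = k - (n:ℤ) := ⟨_, rfl⟩
  obtain ⟨i, hi⟩ := hi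
  set A : Finset ℕ := (Finset.Icc 1 (d-1-n)).filter (fun s => n + s ≤ e (k + s)) with hA
  have hsub1 : cF d e k ⊆ A := by
    intro s hs
    simp only [cF, Finset.mem_filter, Finset.mem_Icc] at hs
    obtain ⟨⟨hs1, hs2⟩, hs3⟩ := hs
    have hns : n + s ≤ e (k + s) := by
      by_contra hc
      push_neg at hc
      have h4 := hval (k + s) s hs1 hs3
      rw [show (k + s - s : ℤ) = k by ring] at h4
      omega
    have h5 : e (k + s) ≤ d - 1 := by have := helt (k + s); omega
    simp only [hA, Finset.mem_filter, Finset.mem_Icc]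
    exact ⟨⟨hs1, by omega⟩, hns⟩
  have hins : insert n (A.image (· + n)) ⊆ cF d e i := by
    intro t ht
    simp only [Finset.mem_insert, Finset.mem_image] at ht
    simp only [cF, Finset.mem_filter, Finset.mem_Icc]
    rcases ht with h | ⟨s, hs, h⟩
    · rw [h]
      refine ⟨⟨hn1, by have := helt k; omega⟩, ?_⟩
      rw [show (i + (n:ℕ) : ℤ) = k by omega]
      exact hne
    · simp only [hA, Finset.mem_filter, Finset.mem_Icc] at hs
      obtain ⟨⟨hs1, hs2⟩, hs3⟩ := hs
      rw [← h]
      refine ⟨⟨by omega, by omega⟩, ?_⟩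
      rw [show (i + ((s + n : ℕ)) : ℤ) = k + s by push_cast; omega]
      omega
  have hnotmem : n ∉ A.image (· + n) := by
    simp only [Finset.mem_image]
    rintro ⟨s, hs, hsn⟩
    simp only [hA, Finset.mem_filter, Finset.mem_Icc] at hs
    omega
  have hcard1 : (insert n (A.image (· + n))).card = A.card + 1 := by
    rw [Finset.card_insert_of_notMem hnotmem,
      Finset.card_image_of_injective _ (add_left_injective n)]
  have h6 : A.card + 1 ≤ cc d e i := by
    rw [← hcard1]; exact Finset.card_le_card hins
  have h7 : cc d e k ≤ A.card := Finset.card_le_card hsub1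
  have h8 := hval k n hn1 hne
  rw [show (k - (n:ℤ)) = i from hi.symm] at h8
  rw [show (k - (n:ℤ)) = i from hi.symm]
  constructor
  · omega
  · simp only [pp]
    omega

lemma cc_C2 (k : ℤ) (n : ℕ) (hn1 : 1 ≤ n) (hne : e k < n) :
    pp d e (k - n) < pp d e k := by
  set i : ℤ := k - (n:ℤ) with hi
  set T1 : Finset ℕ := (Finset.Icc 1 (n-1)).filter (fun t => t ≤ e (i + t)) with hT1
  have hsub : cF d e i ⊆ T1 ∪ (cF d e k).image (· + n) := by
    intro t ht
    simp only [cF, Finset.mem_filter, Finset.mem_Icc] at ht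
    obtain ⟨⟨ht1, ht2⟩, ht3⟩ := ht
    simp only [Finset.mem_union, Finset.mem_image]
    rcases lt_trichotomy t n with h | h | h
    · left; simp only [hT1, Finset.mem_filter, Finset.mem_Icc]
      exact ⟨⟨ht1, by omega⟩, ht3⟩
    · exfalso
      rw [h, show (i + (n:ℕ) : ℤ) = k by omega] at ht3
      omega
    · right
      refine ⟨t - n, ?_, by omega⟩
      simp only [cF, Finset.mem_filter, Finset.mem_Icc]
      refine ⟨⟨by omega, by omega⟩, ?_⟩
      rw [show (k + ((t - n : ℕ)) : ℤ) = i + t by push_cast; omega]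
      omega
  have hT1card : T1.card ≤ n - 1 - e k := by
    have hsub2 : T1 ⊆ Finset.Icc 1 (n - 1 - e k) := by
      intro t ht
      simp only [hT1, Finset.mem_filter, Finset.mem_Icc] at ht
      obtain ⟨⟨ht1, ht2⟩, ht3⟩ := ht
      simp only [Finset.mem_Icc]
      refine ⟨ht1, ?_⟩
      by_contra hc
      push_neg at hc
      -- t ≥ n - e k, so t' := n - t ∈ [1, e k]
      have ht' : 1 ≤ n - t ∧ n - t ≤ e k := by omega
      have h4 := hval k (n - t) ht'.1 ht'.2
      rw [show (k - ((n - t : ℕ)) : ℤ) = i + t by push_cast; omega] at h4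
      omega
    calc T1.card ≤ (Finset.Icc 1 (n - 1 - e k)).card := Finset.card_le_card hsub2
      _ = n - 1 - e k := by rw [Nat.card_Icc]; omega
  have h6 : cc d e i ≤ T1.card + cc d e k := by
    calc cc d e i ≤ (T1 ∪ (cF d e k).image (· + n)).card := Finset.card_le_card hsub
      _ ≤ T1.card + ((cF d e k).image (· + n)).card := Finset.card_union_le _ _
      _ ≤ T1.card + cc d e k := by
          have h9 := Finset.card_image_le (s := cF d e k) (f := (· + n))
          have h10 : cc d e k = (cF d e k).card := rfl
          omega
  have h11 : e (k - (n:ℤ)) = e i := by rw [hi]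
  simp only [pp]
  omega

lemma pp_ord (k : ℤ) (n : ℕ) (hn1 : 1 ≤ n) :
    pp d e k < pp d e (k - n) ↔ n ≤ e k := by
  constructor
  · intro h
    by_contra hc
    push_neg at hc
    have := cc_C2 hd hper hval k n hn1 hc
    omega
  · intro h
    exact (cc_C1 hd hper hval k n hn1 h).2

lemma pp_injective : Function.Injective (pp d e) := by
  intro a b hab
  by_contra hne
  rcases lt_trichotomy a b with h | h | h
  · have hn : 1 ≤ (b - a).toNat := by omega
    have ha : a = b - ((b - a).toNat : ℤ) := by omega
    rcases le_or_gt ((b - a).toNat) (e b) with hc | hc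
    · have := (cc_C1 hd hper hval b _ hn hc).2; rw [← ha] at this; omega
    · have := cc_C2 hd hper hval b _ hn hc; rw [← ha] at this; omega
  · exact hne h
  · have hn : 1 ≤ (a - b).toNat := by omega
    have hb : b = a - ((a - b).toNat : ℤ) := by omega
    rcases le_or_gt ((a - b).toNat) (e a) with hc | hc
    · have := (cc_C1 hd hper hval a _ hn hc).2; rw [← hb] at this; omega
    · have := cc_C2 hd hper hval a _ hn hc; rw [← hb] at this; omega

omit hd hval in
lemma cc_per (k : ℤ) : cc d e (k + d) = cc d e k := by
  unfold cc cF
  congr 1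
  apply Finset.filter_congr
  intro t _
  rw [show (k + d + t : ℤ) = (k + t) + d by ring, hper]

omit hd hval in
lemma pp_per (k : ℤ) : pp d e (k + d) = pp d e k + d := by
  simp only [pp, cc_per hper, hper]
  ring

omit hd hval in
lemma pp_per_mul (k : ℤ) (m : ℤ) : pp d e (k + d * m) = pp d e k + d * m := by
  induction m using Int.induction_on with
  | zero => simp
  | succ n ih =>
      have := pp_per hper (k + d * n)
      rw [show (k + d * (n+1) : ℤ) = (k + d * n) + d by ring, this, ih]; ring
  | pred n ih =>
      have h1 := pp_per hper (k + d * (-(n:ℤ) - 1))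
      rw [show (k + d * (-(n:ℤ)-1) + d : ℤ) = k + d * (-(n:ℤ)) by ring] at h1
      have h2 : (d:ℤ) * (-(n:ℤ)) - d = d * (-(n:ℤ)-1) := by ring
      omega

lemma pp_surjective : Function.Surjective (pp d e) := by
  have hD : (0:ℤ) < d := by exact_mod_cast hd
  set F : Finset ℤ := Finset.Ico (0:ℤ) d with hF
  have hinj : Set.InjOn (fun r => pp d e r % d) F := by
    intro r1 h1 r2 h2 hr
    simp only at hr
    have hdvd : (d:ℤ) ∣ (pp d e r1 - pp d e r2) := Int.ModEq.dvd (hr.symm)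
    obtain ⟨m, hm⟩ := hdvd
    have : pp d e r1 = pp d e (r2 + d * m) := by rw [pp_per_mul hper]; omega
    have hr12 : r1 = r2 + d * m := pp_injective hd hper hval this
    simp only [hF, Finset.coe_Ico, Set.mem_Ico] at h1 h2
    have hm0 : m = 0 := by
      by_contra hm0
      have h1m : 1 ≤ |m| := by
        rcases abs_cases m with ⟨h, _⟩ | ⟨h, _⟩ <;> omega
      have h2 : (d:ℤ) ≤ (d:ℤ) * |m| := le_mul_of_one_le_right (by omega) h1m
      rcases abs_cases m with ⟨hm1, _⟩ | ⟨hm1, _⟩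
      · rw [hm1] at h2; omega
      · rw [hm1, mul_neg] at h2; omega
    rw [hm0, mul_zero, add_zero] at hr12
    exact hr12
  have himg : F.image (fun r => pp d e r % d) = F := by
    apply Finset.eq_of_subset_of_card_le
    · intro x hx
      simp only [Finset.mem_image] at hx
      obtain ⟨r, _, rfl⟩ := hx
      simp only [hF, Finset.mem_Ico]
      exact ⟨Int.emod_nonneg _ (by omega), Int.emod_lt_of_pos _ hD⟩
    · rw [Finset.card_image_of_injOn hinj]
  intro v
  have hv : v % d ∈ F := by
    simp only [hF, Finset.mem_Ico]
    exact ⟨Int.emod_nonneg _ (by omega), Int.emod_lt_of_pos _ hD⟩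
  rw [← himg] at hv
  simp only [Finset.mem_image] at hv
  obtain ⟨r, hrF, hr⟩ := hv
  have hdvd : (d:ℤ) ∣ (v - pp d e r) := Int.ModEq.dvd (hr)
  obtain ⟨m, hm⟩ := hdvd
  exact ⟨r + d * m, by rw [pp_per_mul hper]; omega⟩

/-- the permutation as an `Equiv`. -/
noncomputable def PEquiv : ℤ ≃ ℤ :=
  Equiv.ofBijective (pp d e) ⟨pp_injective hd hper hval, pp_surjective hd hper hval⟩

lemma PEquiv_apply (k : ℤ) : PEquiv hd hper hval k = pp d e k := rfl

/-- Key counting identity : `∑ cc = ∑ e` over a period. -/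
lemma sum_cc_eq_sum_e :
    ∑ k ∈ Finset.Ico (0:ℤ) d, (cc d e k : ℤ) = ∑ k ∈ Finset.Ico (0:ℤ) d, (e k : ℤ) := by
  have helt : ∀ j, e j < d := e_lt hd hper hval
  have hcard : ∀ k : ℤ, (cc d e k : ℤ) =
      ∑ t ∈ Finset.Icc 1 (d-1), (if t ≤ e (k + t) then (1:ℤ) else 0) := by
    intro k
    rw [cc, cF, Finset.card_filter]
    push_cast
    rfl
  calc ∑ k ∈ Finset.Ico (0:ℤ) d, (cc d e k : ℤ)
      = ∑ k ∈ Finset.Ico (0:ℤ) d, ∑ t ∈ Finset.Icc 1 (d-1),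
          (if t ≤ e (k + t) then (1:ℤ) else 0) := by
        exact Finset.sum_congr rfl (fun k _ => hcard k)
    _ = ∑ t ∈ Finset.Icc 1 (d-1), ∑ k ∈ Finset.Ico (0:ℤ) d,
          (if t ≤ e (k + t) then (1:ℤ) else 0) := Finset.sum_comm
    _ = ∑ t ∈ Finset.Icc 1 (d-1), ∑ k ∈ Finset.Ico (0:ℤ) d,
          (if t ≤ e k then (1:ℤ) else 0) := by
        refine Finset.sum_congr rfl (fun t _ => ?_)
        have h1 : ∑ k ∈ Finset.Ico (0:ℤ) d, (if t ≤ e (k + t) then (1:ℤ) else 0)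
            = ∑ k ∈ Finset.Ico ((0:ℤ)+t) ((d:ℤ)+t), (if t ≤ e k then (1:ℤ) else 0) := by
          rw [← sum_Ico_shift' (fun k => if t ≤ e k then (1:ℤ) else 0) 0 d t]
        rw [h1]
        have h2 := periodic_sum_Ico' d (fun k => if t ≤ e k then (1:ℤ) else 0)
          (fun k => by simp [hper k]) ((0:ℤ)+t) 0
        rw [show ((0:ℤ)+t+(d:ℤ)) = (d:ℤ)+t by ring] at h2
        rw [h2]
        norm_num
    _ = ∑ k ∈ Finset.Ico (0:ℤ) d, ∑ t ∈ Finset.Icc 1 (d-1),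
          (if t ≤ e k then (1:ℤ) else 0) := Finset.sum_comm
    _ = ∑ k ∈ Finset.Ico (0:ℤ) d, (e k : ℤ) := by
        refine Finset.sum_congr rfl (fun k _ => ?_)
        rw [Finset.sum_boole]
        have : Finset.filter (fun t => t ≤ e k) (Finset.Icc 1 (d-1)) = Finset.Icc 1 (e k) := by
          ext t
          simp only [Finset.mem_filter, Finset.mem_Icc]
          have := helt k
          omega
        rw [this]
        simp [Nat.card_Icc]

lemma PEquiv_affine : IsAffinePerm d (PEquiv hd hper hval) := by
  constructor
  · intro i
    have := pp_per (d := d) hper i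
    simpa [PEquiv_apply] using this
  · rw [sum_range_eq_Ico' d (fun i => PEquiv hd hper hval i - i)]
    have : ∀ i : ℤ, PEquiv hd hper hval i - i = (cc d e i : ℤ) - (e i : ℤ) := by
      intro i; simp [PEquiv_apply, pp]; ring
    rw [Finset.sum_congr rfl (fun i _ => this i), Finset.sum_sub_distrib,
      sum_cc_eq_sum_e hd hper hval]
    ring

lemma PEquiv_avoids : Avoids312Z (PEquiv hd hper hval) := by
  rintro ⟨i, j, k, hij, hjk, h1, h2⟩
  simp only [PEquiv_apply] at h1 h2
  -- from pp k < pp i : k - i ≤ e k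
  have hki : ((k - i).toNat : ℤ) = k - i := by omega
  have hkj : ((k - j).toNat : ℤ) = k - j := by omega
  have h3 : (k - i).toNat ≤ e k := by
    rw [← pp_ord hd hper hval k _ (by omega)]
    rw [show (k - ((k-i).toNat : ℤ)) = i by omega]
    exact h2
  have h4 : (k - j).toNat ≤ e k := by omega
  have h5 := (pp_ord hd hper hval k _ (show 1 ≤ (k-j).toNat by omega)).mpr h4
  rw [show (k - ((k-j).toNat : ℤ)) = j by omega] at h5
  omega

/-- order characterisation of `pp` : for `j < k`, `pp k < pp j ↔ k - j ≤ e k`. -/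
lemma PEquiv_ord {j k : ℤ} (hjk : j < k) :
    (PEquiv hd hper hval k < PEquiv hd hper hval j ↔ (k - j : ℤ) ≤ e k) := by
  simp only [PEquiv_apply]
  have h1 : 1 ≤ (k - j).toNat := by omega
  have := pp_ord hd hper hval k ((k-j).toNat) h1
  rw [show (k - ((k-j).toNat : ℤ)) = j by omega] at this
  rw [this]
  omega

end Construction

section Stats

/-- a strict bound on displacement. -/
noncomputable def Bd (d : ℕ) (π : ℤ ≃ ℤ) : ℤ :=
  (insert 0 ((Finset.Ico (0:ℤ) d).image (fun r => |π r - r|))).max' (by simp) + 1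

/-- the finset `{j < k : π j > π k}`. -/
noncomputable def estatFS (d : ℕ) (π : ℤ ≃ ℤ) (k : ℤ) : Finset ℤ :=
  (Finset.Ico (π k - Bd d π) k).filter (fun j => π k < π j)

noncomputable def estat (d : ℕ) (π : ℤ ≃ ℤ) (k : ℤ) : ℕ := (estatFS d π k).card

variable {d : ℕ} {π : ℤ ≃ ℤ}
variable (hd : 1 ≤ d) (hπ : IsAffinePerm d π)

include hd hπ

lemma pi_shift_mul : ∀ (m : ℤ) (i : ℤ), π (i + d * m) = π i + d * m := by
  intro m
  induction m using Int.induction_on with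
  | zero => simp
  | succ n ih =>
      intro i
      have h1 := hπ.1 (i + d * n)
      have h2 := ih i
      have h3 : (i + d * ((n:ℤ)+1)) = (i + d * n) + d := by ring
      rw [h3, h1, h2]; ring
  | pred n ih =>
      intro i
      have h1 := hπ.1 (i + d * (-(n:ℤ) - 1))
      rw [show (i + (d:ℤ) * (-(n:ℤ)-1) + d) = i + d * (-(n:ℤ)) by ring] at h1
      have h2 := ih i
      have h4 : (d:ℤ) * (-(n:ℤ)) - d = d * (-(n:ℤ) - 1) := by ring
      omega

lemma Bd_bound : ∀ i : ℤ, |π i - i| < Bd d π := by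
  intro i
  have hD : (0:ℤ) < d := by exact_mod_cast hd
  have hmod : i % d ∈ Finset.Ico (0:ℤ) d := by
    simp only [Finset.mem_Ico]
    exact ⟨Int.emod_nonneg _ (by omega), Int.emod_lt_of_pos _ hD⟩
  have hsplit : i = i % d + d * (i / d) := (Int.emod_add_mul_ediv i d).symm
  have hs := pi_shift_mul hd hπ (i / d) (i % d)
  have hdisp : π i - i = π (i % d) - (i % d) := by
    conv_lhs => rw [hsplit]
    rw [hs]; ring
  rw [hdisp]
  have hmem : |π (i % d) - (i % d)| ∈
      insert 0 ((Finset.Ico (0:ℤ) d).image (fun r => |π r - r|)) :=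
    Finset.mem_insert_of_mem (Finset.mem_image_of_mem _ hmod)
  have := Finset.le_max' _ _ hmem
  unfold Bd
  omega

variable (hav : Avoids312Z π)

omit hd hπ in
lemma mem_estatFS (hB : ∀ i : ℤ, |π i - i| < Bd d π) (k j : ℤ) :
    j ∈ estatFS d π k ↔ j < k ∧ π k < π j := by
  simp only [estatFS, Finset.mem_filter, Finset.mem_Ico]
  constructor
  · rintro ⟨⟨h1, h2⟩, h3⟩; exact ⟨h2, h3⟩
  · rintro ⟨h1, h2⟩
    refine ⟨⟨?_, h1⟩, h2⟩
    have := abs_lt.mp (hB j)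
    omega

include hav

omit hd hπ in
lemma av' : ∀ i j k : ℤ, i < j → j < k → π k < π i → π k < π j := by
  intro i j k hij hjk h1
  rcases lt_trichotomy (π j) (π k) with h | h | h
  · exact absurd ⟨i, j, k, hij, hjk, h, h1⟩ hav
  · have := π.injective h; omega
  · exact h

lemma estatFS_eq_Ico (k : ℤ) :
    estatFS d π k = Finset.Ico (k - estat d π k) k := by
  have hB := Bd_bound hd hπ
  rcases Finset.eq_empty_or_nonempty (estatFS d π k) with h | h
  · rw [h]
    have : estat d π k = 0 := by simp [estat, h]
    rw [this]
    simp
  · set m := (estatFS d π k).min' h with hm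
    have hmmem : m ∈ estatFS d π k := Finset.min'_mem _ h
    rw [mem_estatFS hB] at hmmem
    have hIco : estatFS d π k = Finset.Ico m k := by
      ext x
      rw [mem_estatFS hB]
      simp only [Finset.mem_Ico]
      constructor
      · rintro ⟨h1, h2⟩
        refine ⟨?_, h1⟩
        have : x ∈ estatFS d π k := by rw [mem_estatFS hB]; exact ⟨h1, h2⟩
        exact Finset.min'_le _ _ this
      · rintro ⟨h1, h2⟩
        refine ⟨h2, ?_⟩
        rcases eq_or_lt_of_le h1 with rfl | h1'
        · exact hmmem.2
        · exact av' hav m x k h1' h2 hmmem.2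
    have hcard : estat d π k = (k - m).toNat := by
      rw [estat, hIco, Int.card_Ico]
    rw [hIco, hcard]
    congr 1
    have : m < k := hmmem.1
    omega

lemma estat_char {j k : ℤ} (hjk : j < k) :
    π k < π j ↔ (k - j : ℤ) ≤ estat d π k := by
  have hB := Bd_bound hd hπ
  have h1 : j ∈ estatFS d π k ↔ π k < π j := by
    rw [mem_estatFS hB]; tauto
  rw [← h1, estatFS_eq_Ico hd hπ hav]
  simp only [Finset.mem_Ico]
  omega

lemma estat_per (k : ℤ) : estat d π (k + d) = estat d π k := by
  have hB := Bd_bound hd hπ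
  unfold estat
  refine Finset.card_nbij' (fun j => j - d) (fun j => j + d) ?_ ?_ ?_ ?_
  · intro x hx
    rw [Finset.mem_coe, mem_estatFS hB] at hx
    rw [Finset.mem_coe, mem_estatFS hB]
    have h1 := hπ.1 (x - d)
    rw [show (x - (d:ℤ) + d) = x by ring] at h1
    have h2 := hπ.1 k
    dsimp only
    omega
  · intro x hx
    rw [Finset.mem_coe, mem_estatFS hB] at hx
    rw [Finset.mem_coe, mem_estatFS hB]
    have h1 := hπ.1 x
    have h2 := hπ.1 k
    dsimp only
    omega
  · intro x hx; dsimp only; omega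
  · intro x hx; dsimp only; omega

lemma estat_valid (k : ℤ) (t : ℕ) (ht1 : 1 ≤ t) (ht2 : t ≤ estat d π k) :
    estat d π (k - t) + t ≤ estat d π k := by
  have hB := Bd_bound hd hπ
  set j : ℤ := k - (t:ℤ) with hj
  rcases Nat.eq_zero_or_pos (estat d π j) with h0 | h0
  · omega
  · set m : ℤ := j - estat d π j with hm2
    have hmmem : m ∈ estatFS d π j := by
      rw [estatFS_eq_Ico hd hπ hav]
      simp only [Finset.mem_Ico]
      omega
    rw [mem_estatFS hB] at hmmem
    have hjk2 : π k < π j := by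
      rw [estat_char hd hπ hav (show j < k by omega)]
      omega
    have hmk : m ∈ estatFS d π k := by
      rw [mem_estatFS hB]
      constructor
      · omega
      · omega
    rw [estatFS_eq_Ico hd hπ hav] at hmk
    simp only [Finset.mem_Ico] at hmk
    omega

lemma estat_lt (k : ℤ) : estat d π k < d := by
  by_contra h
  push_neg at h
  have h2 := estat_valid hd hπ hav k d hd h
  have h3 : estat d π (k - d) = estat d π k := by
    have := estat_per hd hπ hav (k - d)
    rw [show (k - (d:ℤ) + d) = k by ring] at this
    omega
  omega

end Stats

section EstatPEquiv
variable {d : ℕ} {e : ℤ → ℕ}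
variable (hd : 1 ≤ d) (hper : ∀ k, e (k + d) = e k)
  (hval : ∀ (k : ℤ) (t : ℕ), 1 ≤ t → t ≤ e k → e (k - t) + t ≤ e k)

/-- the `estat` of the constructed permutation recovers `e`. -/
lemma estat_PEquiv (k : ℤ) : estat d (PEquiv hd hper hval) k = e k := by
  have haff := PEquiv_affine hd hper hval
  have hB := Bd_bound hd haff
  have hIco : estatFS d (PEquiv hd hper hval) k = Finset.Ico (k - e k) k := by
    ext j
    rw [mem_estatFS hB]
    simp only [Finset.mem_Ico]
    constructor
    · rintro ⟨h1, h2⟩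
      rw [PEquiv_ord hd hper hval h1] at h2
      omega
    · rintro ⟨h1, h2⟩
      refine ⟨h2, ?_⟩
      rw [PEquiv_ord hd hper hval h2]
      omega
  rw [estat, hIco, Int.card_Ico]
  omega

end EstatPEquiv

section Uniqueness

lemma equiv_mono_translation (σ : ℤ ≃ ℤ) (hmono : ∀ u v : ℤ, u < v → σ u < σ v) :
    ∀ n : ℤ, σ n = n + σ 0 := by
  have hstep : ∀ n : ℤ, σ (n + 1) = σ n + 1 := by
    intro n
    have h1 : σ n < σ (n+1) := hmono n (n+1) (by omega)
    by_contra hne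
    have h2 : σ n + 1 < σ (n+1) := by omega
    obtain ⟨m, h3⟩ : ∃ m, σ m = σ n + 1 := ⟨σ.symm _, σ.apply_symm_apply _⟩
    rcases lt_trichotomy m n with h | h | h
    · have := hmono m n h; omega
    · rw [h] at h3; omega
    · rcases lt_trichotomy m (n+1) with h' | h' | h'
      · omega
      · rw [h'] at h3; omega
      · have := hmono (n+1) m h'; omega
  intro n
  induction n using Int.induction_on with
  | zero => omega
  | succ n ih => have := hstep n; omega
  | pred n ih =>
      have := hstep (-(n:ℤ) - 1)
      rw [show (-(n:ℤ) - 1 + 1) = -(n:ℤ) by ring] at this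
      omega

variable {d : ℕ} {π : ℤ ≃ ℤ}
variable (hd : 1 ≤ d) (hπ : IsAffinePerm d π) (hav : Avoids312Z π)

/-- an avoiding affine permutation equals the one constructed from its `estat`. -/
lemma avoider_eq_PEquiv :
    π = PEquiv hd (estat_per hd hπ hav) (estat_valid hd hπ hav) := by
  set P := PEquiv hd (estat_per hd hπ hav) (estat_valid hd hπ hav) with hP
  set σ : ℤ ≃ ℤ := π.symm.trans P with hσ
  have hσap : ∀ v, σ v = P (π.symm v) := fun v => rfl
  have hmono : ∀ u v : ℤ, u < v → σ u < σ v := by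
    intro u v huv
    rw [hσap, hσap]
    set i := π.symm u with hi
    set k := π.symm v with hk
    have hpik : π i < π k := by
      rw [hi, hk, π.apply_symm_apply, π.apply_symm_apply]; exact huv
    have hik : i ≠ k := by intro h; rw [h] at hpik; omega
    rcases lt_trichotomy i k with h | h | h
    · have h1 : ¬ (π k < π i) := by omega
      rw [estat_char hd hπ hav h] at h1
      have h2 : ¬ (P k < P i) := by
        rw [PEquiv_ord hd (estat_per hd hπ hav) (estat_valid hd hπ hav) h]
        exact h1
      have h3 : P i ≠ P k := fun hc => hik (P.injective hc)
      omega
    · exact absurd h hik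
    · have h1 : π i < π k := hpik
      rw [estat_char hd hπ hav h] at h1
      have h2 : P i < P k := by
        rw [PEquiv_ord hd (estat_per hd hπ hav) (estat_valid hd hπ hav) h]
        exact h1
      exact h2
  have htrans := equiv_mono_translation σ hmono
  have hPk : ∀ k : ℤ, P k = π k + σ 0 := by
    intro k
    have := htrans (π k)
    rw [hσap, π.symm_apply_apply] at this
    omega
  have hsum1 : ∑ i ∈ Finset.range d, (P i - i) = 0 :=
    (PEquiv_affine hd (estat_per hd hπ hav) (estat_valid hd hπ hav)).2
  have hsum2 : ∑ i ∈ Finset.range d, (π i - i) = 0 := hπ.2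
  have hsum3 : ∑ i ∈ Finset.range d, (P i - i)
      = ∑ i ∈ Finset.range d, ((π i - i) + σ 0) := by
    refine Finset.sum_congr rfl (fun i _ => ?_)
    rw [hPk]; ring
  rw [Finset.sum_add_distrib, hsum2, Finset.sum_const, Finset.card_range] at hsum3
  have hc0 : σ 0 = 0 := by
    rw [hsum1] at hsum3
    have : (d:ℤ) • σ 0 = d * σ 0 := by simp [zsmul_eq_mul]
    rw [nsmul_eq_mul] at hsum3
    have hd0 : (d:ℤ) ≠ 0 := by positivity
    have h5 : (d:ℤ) * σ 0 = 0 := by linarith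
    rcases mul_eq_zero.mp h5 with h | h
    · exact absurd h hd0
    · exact h
  ext k
  rw [hPk, hc0, add_zero]

end Uniqueness

section Matching

variable (d : ℕ) (hd : 1 ≤ d) (o : Fin d → ℕ)

/-- periodic extension of a composition. -/
def Oof : ℤ → ℕ := fun i =>
  o ⟨(i % d).toNat, by
    have hD : (0:ℤ) < (d:ℤ) := by exact_mod_cast hd
    have h1 := Int.emod_nonneg i (by omega : (d:ℤ) ≠ 0)
    have h2 := Int.emod_lt_of_pos i hD
    omega⟩

lemma Oof_per (i : ℤ) : Oof d hd o (i + d) = Oof d hd o i := by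
  simp only [Oof]
  congr 1
  apply Fin.ext
  simp only
  have h : (i + (d:ℤ) * 1) % d = i % d := Int.add_mul_emod_self_left (a := i) (b := (d:ℤ)) (c := 1)
  rw [mul_one] at h
  rw [h]

lemma Oof_at (j : Fin d) : Oof d hd o (j : ℤ) = o j := by
  simp only [Oof]
  congr 1
  apply Fin.ext
  simp only
  have h1 : ((j:ℤ)) % d = (j:ℤ) := Int.emod_eq_of_lt (by positivity) (by exact_mod_cast j.2)
  rw [h1]
  simp

variable (hsum : ∑ j, o j = d)

include hd hsum in
lemma sumO (a : ℤ) : ∑ i ∈ Finset.Ico a (a + d), Oof d hd o i = d := by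
  rw [periodic_sum_Ico' d _ (Oof_per d hd o) a 0]
  rw [show ((0:ℤ) + (d:ℤ)) = (d:ℤ) by ring]
  rw [← sum_range_eq_Ico' d (Oof d hd o)]
  have h6 : ∑ i ∈ Finset.range d, Oof d hd o (i:ℤ) = ∑ j, o j := by
    rw [← Fin.sum_univ_eq_sum_range (fun i => Oof d hd o (i:ℤ)) d]
    exact Finset.sum_congr rfl (fun j _ => Oof_at d hd o j)
  rw [h6, hsum]

/-- height function: partial sums of `O i - 1`. -/
noncomputable def Hf : ℤ → ℤ := fun m =>
  (∑ i ∈ Finset.Ico (0:ℤ) (m+1), ((Oof d hd o i : ℤ) - 1))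
  - (∑ i ∈ Finset.Ico (m+1) (0:ℤ), ((Oof d hd o i : ℤ) - 1))

lemma Hf_step (m : ℤ) : Hf d hd o m = Hf d hd o (m-1) + ((Oof d hd o m : ℤ) - 1) := by
  rcases le_or_gt 0 m with h | h
  · have h1 : Finset.Ico (0:ℤ) (m+1) = insert m (Finset.Ico (0:ℤ) m) := by
      ext x; simp only [Finset.mem_Ico, Finset.mem_insert]; omega
    have h2 : Finset.Ico (m+1) (0:ℤ) = (∅ : Finset ℤ) := by
      apply Finset.Ico_eq_empty; omega
    have h3 : Finset.Ico (m-1+1) (0:ℤ) = (∅ : Finset ℤ) := by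
      apply Finset.Ico_eq_empty; omega
    simp only [Hf, h1, h2, h3]
    rw [Finset.sum_insert (by simp)]
    rw [show (m - 1 + 1 : ℤ) = m by ring]
    simp only [Finset.sum_empty]
    ring
  · have h1 : Finset.Ico (0:ℤ) (m+1) = (∅ : Finset ℤ) := by
      apply Finset.Ico_eq_empty; omega
    have h2 : Finset.Ico (0:ℤ) (m-1+1) = (∅ : Finset ℤ) := by
      apply Finset.Ico_eq_empty; omega
    have h3 : Finset.Ico m (0:ℤ) = insert m (Finset.Ico (m+1) (0:ℤ)) := by
      ext x; simp only [Finset.mem_Ico, Finset.mem_insert]; omega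
    simp only [Hf, h1, h2]
    rw [show (m - 1 + 1 : ℤ) = m by ring, h3]
    rw [Finset.sum_insert (by simp)]
    simp only [Finset.sum_empty]
    ring

lemma Hf_diff : ∀ (n : ℕ) (a : ℤ),
    Hf d hd o (a + n) - Hf d hd o a
      = ∑ i ∈ Finset.Ico (a+1) (a + n + 1), ((Oof d hd o i : ℤ) - 1) := by
  intro n
  induction n with
  | zero => intro a; simp
  | succ n ih =>
      intro a
      have ihh := ih a
      have hs := Hf_step d hd o (a + (n:ℤ) + 1)
      rw [show (a + (n:ℤ) + 1 - 1) = a + (n:ℤ) by ring] at hs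
      have hcast : ((n+1 : ℕ) : ℤ) = (n:ℤ) + 1 := by push_cast; ring
      rw [hcast, show (a + ((n:ℤ)+1)) = a + (n:ℤ) + 1 by ring]
      have h1 : Finset.Ico (a+1) (a + (n:ℤ) + 1 + 1)
          = insert (a+(n:ℤ)+1) (Finset.Ico (a+1) (a+(n:ℤ)+1)) := by
        ext x; simp only [Finset.mem_Ico, Finset.mem_insert]; omega
      rw [h1, Finset.sum_insert (by simp only [Finset.mem_Ico]; omega)]
      omega

lemma Hf_sum_Icc (k : ℤ) (t : ℕ) :
    (∑ i ∈ Finset.Icc (k - (t:ℤ)) k, (Oof d hd o i : ℤ))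
      = Hf d hd o k - Hf d hd o (k - t - 1) + (t + 1) := by
  have h1 := Hf_diff d hd o (t+1) (k - t - 1)
  rw [show ((k - (t:ℤ) - 1) + ((t+1 : ℕ) : ℤ)) = k by push_cast; ring] at h1
  rw [show ((k - (t:ℤ) - 1) + 1) = k - t by ring] at h1
  have h2 : Finset.Icc (k - (t:ℤ)) k = Finset.Ico (k - (t:ℤ)) (k+1) := by
    ext x; simp only [Finset.mem_Icc, Finset.mem_Ico]; omega
  rw [h2]
  have h3 : ∑ i ∈ Finset.Ico (k - (t:ℤ)) (k+1), ((Oof d hd o i : ℤ) - 1)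
      = (∑ i ∈ Finset.Ico (k - (t:ℤ)) (k+1), (Oof d hd o i : ℤ))
        - (Finset.Ico (k - (t:ℤ)) (k+1)).card := by
    rw [Finset.sum_sub_distrib, Finset.sum_const]
    simp [nsmul_eq_mul]
  have h4 : ((Finset.Ico (k - (t:ℤ)) (k+1)).card : ℤ) = t + 1 := by
    rw [Int.card_Ico]; omega
  omega

/-- the predicate for `eo`. -/
def Pm (k : ℤ) (t : ℕ) : Prop := (t:ℤ) + 1 ≤ ∑ i ∈ Finset.Icc (k - (t:ℤ)) k, (Oof d hd o i : ℤ)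

noncomputable instance (k : ℤ) (t : ℕ) : Decidable (Pm d hd o k t) := by unfold Pm; infer_instance

include hsum in
lemma Pm_top (k : ℤ) : Pm d hd o k (d - 1) := by
  unfold Pm
  have h2 : Finset.Icc (k - ((d:ℕ) - 1 : ℕ) : ℤ) k
      = Finset.Ico (k - ((d:ℕ) - 1 : ℕ) : ℤ) ((k - ((d:ℕ) - 1 : ℕ)) + d) := by
    ext x
    simp only [Finset.mem_Icc, Finset.mem_Ico]
    have : (((d:ℕ) - 1 : ℕ) : ℤ) = (d:ℤ) - 1 := by omega
    omega
  rw [h2]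
  have h3 := sumO d hd o hsum (k - ((d:ℕ) - 1 : ℕ))
  have h4 : (((d:ℕ) - 1 : ℕ) : ℤ) = (d:ℤ) - 1 := by omega
  have h5 : (∑ i ∈ Finset.Ico (k - ((d:ℕ) - 1 : ℕ) : ℤ) ((k - ((d:ℕ) - 1 : ℕ)) + d),
      (Oof d hd o i : ℤ)) = (d:ℤ) := by exact_mod_cast congrArg (Nat.cast : ℕ → ℤ) h3
  omega

include hsum in
lemma Pm_exists (k : ℤ) : ∃ t : ℕ, Pm d hd o k t := ⟨d - 1, Pm_top d hd o hsum k⟩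

/-- the minimal `t` : the valid `e`-statistic built from the composition. -/
noncomputable def eo (k : ℤ) : ℕ := Nat.find (Pm_exists d hd o hsum k)

include hsum in
lemma eo_spec (k : ℤ) : Pm d hd o k (eo d hd o hsum k) := Nat.find_spec (Pm_exists d hd o hsum k)

include hsum in
lemma eo_min (k : ℤ) {t : ℕ} (ht : t < eo d hd o hsum k) : ¬ Pm d hd o k t :=
  Nat.find_min (Pm_exists d hd o hsum k) ht

include hsum in
lemma eo_le (k : ℤ) : eo d hd o hsum k ≤ d - 1 :=
  Nat.find_le (Pm_top d hd o hsum k)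

include hsum in
lemma Pm_shift (k : ℤ) (t : ℕ) : Pm d hd o (k + d) t ↔ Pm d hd o k t := by
  unfold Pm
  have h1 : ∑ i ∈ Finset.Icc (k + d - t) (k + d), (Oof d hd o i : ℤ)
      = ∑ i ∈ Finset.Icc (k - t) k, (Oof d hd o i : ℤ) := by
    calc ∑ i ∈ Finset.Icc (k + d - t) (k + d), (Oof d hd o i : ℤ)
        = ∑ i ∈ Finset.Ico (k - t + d) (k + 1 + d), (Oof d hd o i : ℤ) := by
          apply Finset.sum_congr _ (fun _ _ => rfl)
          ext x; simp only [Finset.mem_Icc, Finset.mem_Ico]; omega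
      _ = ∑ i ∈ Finset.Ico (k - t) (k + 1), (Oof d hd o (i + d) : ℤ) :=
          (sum_Ico_shift' (fun i => (Oof d hd o i : ℤ)) (k - t) (k + 1) d).symm
      _ = ∑ i ∈ Finset.Ico (k - t) (k + 1), (Oof d hd o i : ℤ) := by
          refine Finset.sum_congr rfl (fun i _ => ?_)
          rw [Oof_per]
      _ = ∑ i ∈ Finset.Icc (k - t) k, (Oof d hd o i : ℤ) := by
          apply Finset.sum_congr _ (fun _ _ => rfl)
          ext x; simp only [Finset.mem_Icc, Finset.mem_Ico]; omega
  rw [h1]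

include hsum in
lemma eo_per (k : ℤ) : eo d hd o hsum (k + d) = eo d hd o hsum k := by
  apply le_antisymm
  · exact Nat.find_le ((Pm_shift d hd o hsum k _).mpr (eo_spec d hd o hsum k))
  · apply Nat.find_le
    exact (Pm_shift d hd o hsum k _).mp (eo_spec d hd o hsum (k + d))

include hsum in
lemma eo_valid (k : ℤ) (t : ℕ) (ht1 : 1 ≤ t) (ht2 : t ≤ eo d hd o hsum k) :
    eo d hd o hsum (k - t) + t ≤ eo d hd o hsum k := by
  have hE : Pm d hd o k (eo d hd o hsum k) := eo_spec d hd o hsum k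
  have hPf : ¬ Pm d hd o k (t - 1) := eo_min d hd o hsum k (by omega)
  set E := eo d hd o hsum k with hEdef
  have key : Pm d hd o (k - t) (E - t) := by
    unfold Pm at hE hPf ⊢
    have hcast1 : ((E - t : ℕ) : ℤ) = (E:ℤ) - t := by omega
    have hcast2 : ((t - 1 : ℕ) : ℤ) = (t:ℤ) - 1 := by omega
    rw [hcast2] at hPf
    rw [hcast1]
    have hsetT : Finset.Icc (k - (t:ℤ) - ((E:ℤ) - t)) (k - (t:ℤ))
        = Finset.Ico (k - (E:ℤ)) (k - t + 1) := by
      ext x; simp only [Finset.mem_Icc, Finset.mem_Ico]; omega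
    have hsetA : Finset.Icc (k - (E:ℤ)) k = Finset.Ico (k - (E:ℤ)) (k + 1) := by
      ext x; simp only [Finset.mem_Icc, Finset.mem_Ico]; omega
    have hsetB : Finset.Icc (k - ((t:ℤ) - 1)) k = Finset.Ico (k - (t:ℤ) + 1) (k + 1) := by
      ext x; simp only [Finset.mem_Icc, Finset.mem_Ico]; omega
    rw [hsetT]
    rw [hsetA] at hE
    rw [hsetB] at hPf
    have hunion : Finset.Ico (k - (E:ℤ)) (k - t + 1) ∪ Finset.Ico (k - (t:ℤ) + 1) (k + 1)
        = Finset.Ico (k - (E:ℤ)) (k + 1) :=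
      Finset.Ico_union_Ico_eq_Ico (by omega) (by omega)
    have hdisj : Disjoint (Finset.Ico (k - (E:ℤ)) (k - t + 1))
        (Finset.Ico (k - (t:ℤ) + 1) (k + 1)) := Finset.Ico_disjoint_Ico_consecutive _ _ _
    have hsum2 : (∑ i ∈ Finset.Ico (k - (E:ℤ)) (k - t + 1), (Oof d hd o i : ℤ))
        + ∑ i ∈ Finset.Ico (k - (t:ℤ) + 1) (k + 1), (Oof d hd o i : ℤ)
        = ∑ i ∈ Finset.Ico (k - (E:ℤ)) (k + 1), (Oof d hd o i : ℤ) := by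
      rw [← Finset.sum_union hdisj, hunion]
    omega
  have h9 : eo d hd o hsum (k - (t:ℤ)) ≤ E - t :=
    Nat.find_le (h := Pm_exists d hd o hsum (k - (t:ℤ))) key
  omega

include hsum in
/-- `Pm` in terms of the height function. -/
lemma Pm_iff_H (k : ℤ) (t : ℕ) :
    Pm d hd o k t ↔ Hf d hd o (k - t - 1) ≤ Hf d hd o k := by
  unfold Pm
  have := Hf_sum_Icc d hd o k t
  omega

include hsum in
lemma Hf_per (m : ℤ) : Hf d hd o (m + d) = Hf d hd o m := by
  have h1 := Hf_diff d hd o d m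
  have h2 : ∑ i ∈ Finset.Ico (m+1) (m + (d:ℤ) + 1), ((Oof d hd o i : ℤ) - 1)
      = (∑ i ∈ Finset.Ico (m+1) ((m+1) + (d:ℤ)), (Oof d hd o i : ℤ))
        - (Finset.Ico (m+1) ((m+1) + (d:ℤ))).card := by
    rw [show (m + (d:ℤ) + 1) = (m + 1) + d by ring, Finset.sum_sub_distrib, Finset.sum_const]
    simp [nsmul_eq_mul]
  have h3 := sumO d hd o hsum (m+1)
  have h4 : (∑ i ∈ Finset.Ico (m+1) ((m+1) + (d:ℤ)), (Oof d hd o i : ℤ)) = (d:ℤ) := by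
    exact_mod_cast congrArg (Nat.cast : ℕ → ℤ) h3
  have h5 : ((Finset.Ico (m+1) ((m+1) + (d:ℤ))).card : ℤ) = d := by
    rw [Int.card_Ico]; omega
  omega

/-- `Hf` decreases by at most 1. -/
lemma Hf_down (m : ℤ) : Hf d hd o (m - 1) ≤ Hf d hd o m + 1 := by
  have := Hf_step d hd o m
  have : (0:ℤ) ≤ Oof d hd o m := by positivity
  omega

include hsum in
lemma count_eo_window (j₀ : ℤ) (hj1 : 0 ≤ j₀) (hj2 : j₀ < (d:ℤ)) :
    ((Finset.Ico j₀ (j₀ + (d:ℤ))).filter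
      (fun k => k - (eo d hd o hsum k : ℤ) = j₀)).card = Oof d hd o j₀ := by
  have hD : (0:ℤ) < d := by exact_mod_cast hd
  set S := (Finset.Ico j₀ (j₀ + (d:ℤ))).filter
      (fun k => k - (eo d hd o hsum k : ℤ) = j₀) with hS
  have hstep := Hf_step d hd o j₀
  have hmemS : ∀ k, k ∈ S ↔ (j₀ ≤ k ∧ k < j₀ + d ∧ k - (eo d hd o hsum k : ℤ) = j₀) := by
    intro k; simp only [hS, Finset.mem_filter, Finset.mem_Ico]; tauto
  have hHlow : ∀ k ∈ S, Hf d hd o (j₀ - 1) ≤ Hf d hd o k := by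
    intro k hk
    rw [hmemS] at hk
    have h1 := (Pm_iff_H d hd o hsum k (eo d hd o hsum k)).mp (eo_spec d hd o hsum k)
    rw [show (k - (eo d hd o hsum k : ℤ) - 1) = j₀ - 1 by omega] at h1
    exact h1
  have hHdec : ∀ k1 ∈ S, ∀ k2 ∈ S, k1 < k2 → Hf d hd o k2 < Hf d hd o k1 := by
    intro k1 hk1 k2 hk2 h12
    rw [hmemS] at hk1 hk2
    have ht : ((k2 - k1 - 1).toNat) < eo d hd o hsum k2 := by omega
    have h2 := eo_min d hd o hsum k2 ht
    rw [Pm_iff_H d hd o hsum] at h2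
    rw [show (k2 - ((k2 - k1 - 1).toNat : ℤ) - 1) = k1 by omega] at h2
    omega
  have hHhigh : ∀ k ∈ S, Hf d hd o k ≤ Hf d hd o j₀ := by
    intro k hk
    rw [hmemS] at hk
    rcases eq_or_lt_of_le hk.1 with h | h
    · rw [← h]
    · have ht : ((k - j₀ - 1).toNat) < eo d hd o hsum k := by omega
      have h2 := eo_min d hd o hsum k ht
      rw [Pm_iff_H d hd o hsum] at h2
      rw [show (k - ((k - j₀ - 1).toNat : ℤ) - 1) = j₀ by omega] at h2
      omega
  have hcard : S.card = (Finset.Icc (Hf d hd o (j₀ - 1)) (Hf d hd o j₀)).card := by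
    refine Finset.card_bij (fun k _ => Hf d hd o k) ?_ ?_ ?_
    · intro k hk
      simp only [Finset.mem_Icc]
      exact ⟨hHlow k hk, hHhigh k hk⟩
    · intro k1 hk1 k2 hk2 heq
      by_contra hne
      rcases lt_or_gt_of_ne hne with h | h
      · have := hHdec k1 hk1 k2 hk2 h; omega
      · have := hHdec k2 hk2 k1 hk1 h; omega
    · intro ℓ hℓ
      simp only [Finset.mem_Icc] at hℓ
      have hex : ∃ n : ℕ, Hf d hd o (j₀ + (n:ℤ)) ≤ ℓ := by
        refine ⟨d - 1, ?_⟩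
        have hp := Hf_per d hd o hsum (j₀ - 1)
        rw [show (j₀ - 1 + (d:ℤ)) = j₀ + ((d - 1 : ℕ) : ℤ) by omega] at hp
        omega
      set n₀ := Nat.find hex with hn₀
      have hspec : Hf d hd o (j₀ + (n₀:ℤ)) ≤ ℓ := Nat.find_spec hex
      have hub : n₀ ≤ d - 1 := by
        apply Nat.find_le
        have hp := Hf_per d hd o hsum (j₀ - 1)
        rw [show (j₀ - 1 + (d:ℤ)) = j₀ + ((d - 1 : ℕ) : ℤ) by omega] at hp
        omega
      have hmin : ∀ m : ℕ, m < n₀ → ℓ < Hf d hd o (j₀ + (m:ℤ)) := by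
        intro m hm
        have := Nat.find_min hex hm
        omega
      have hEq : Hf d hd o (j₀ + (n₀:ℤ)) = ℓ := by
        rcases Nat.eq_zero_or_pos n₀ with h0 | h0
        · rw [h0] at hspec ⊢
          simp only [Nat.cast_zero, add_zero] at hspec ⊢
          omega
        · have hprev := hmin (n₀ - 1) (by omega)
          have hdown := Hf_step d hd o (j₀ + (n₀:ℤ))
          rw [show (j₀ + (n₀:ℤ) - 1) = j₀ + ((n₀ - 1 : ℕ) : ℤ) by omega] at hdown
          have : (0:ℤ) ≤ Oof d hd o (j₀ + (n₀:ℤ)) := by positivity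
          omega
      have heo : eo d hd o hsum (j₀ + (n₀:ℤ)) = n₀ := by
        apply le_antisymm
        · apply Nat.find_le (h := Pm_exists d hd o hsum (j₀ + (n₀:ℤ)))
          rw [Pm_iff_H d hd o hsum]
          rw [show (j₀ + (n₀:ℤ) - (n₀:ℤ) - 1) = j₀ - 1 by ring]
          omega
        · by_contra hc
          push_neg at hc
          have hPk := eo_spec d hd o hsum (j₀ + (n₀:ℤ))
          rw [Pm_iff_H d hd o hsum] at hPk
          have hm := hmin (n₀ - 1 - eo d hd o hsum (j₀ + (n₀:ℤ))) (by omega)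
          rw [show (j₀ + (n₀:ℤ) - (eo d hd o hsum (j₀ + (n₀:ℤ)) : ℤ) - 1)
              = j₀ + ((n₀ - 1 - eo d hd o hsum (j₀ + (n₀:ℤ)) : ℕ) : ℤ) by omega] at hPk
          omega
      refine ⟨j₀ + (n₀:ℤ), ?_, hEq⟩
      rw [hmemS]
      refine ⟨by omega, by omega, by omega⟩
  rw [hcard, Int.card_Icc]
  omega

end Matching

/-! ### modular helpers -/

lemma dvd_small_eq {D x y : ℤ} (hD : 0 < D) (hdvd : D ∣ (x - y))
    (h1 : -D < x - y) (h2 : x - y < D) : x = y := by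
  obtain ⟨m, hm⟩ := hdvd
  rcases lt_trichotomy m 0 with h | h | h
  · have hle : D * m ≤ D * (-1) := mul_le_mul_of_nonneg_left (by omega) (by omega)
    rw [mul_neg_one] at hle
    omega
  · rw [h, mul_zero] at hm; omega
  · have hle : D * 1 ≤ D * m := mul_le_mul_of_nonneg_left (by omega) (by omega)
    rw [mul_one] at hle
    omega

lemma emod_eq_iff {D x j : ℤ} (hD : 0 < D) (hj1 : 0 ≤ j) (hj2 : j < D)
    (hx1 : j - D < x) (hx2 : x < j + D) :
    x % D = j ↔ x = j := by
  constructor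
  · intro h
    have hmod : x % D = j % D := by rw [h, Int.emod_eq_of_lt hj1 hj2]
    have hdvd : D ∣ (j - x) := Int.ModEq.dvd hmod
    have := dvd_small_eq hD hdvd (by omega) (by omega)
    omega
  · intro h; rw [h]; exact Int.emod_eq_of_lt hj1 hj2

/-! ### transporting residue counts to arbitrary windows -/

lemma count_window (d : ℕ) (hd : 1 ≤ d) (e : ℤ → ℕ) (hper : ∀ k, e (k + d) = e k)
    (hlt : ∀ k, e k < d) (j₀ : ℤ) :
    ((Finset.Ico (0:ℤ) d).filter (fun r => (r - (e r : ℤ)) % d = j₀ % d)).card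
      = ((Finset.Ico j₀ (j₀ + (d:ℤ))).filter (fun k => k - (e k : ℤ) = j₀)).card := by
  have hD : (0:ℤ) < d := by exact_mod_cast hd
  have hcf : ∀ (a : ℤ),
      ((Finset.Ico a (a + (d:ℤ))).filter (fun r => (r - (e r : ℤ)) % d = j₀ % d)).card
      = ∑ r ∈ Finset.Ico a (a + (d:ℤ)),
          (if (r - (e r : ℤ)) % d = j₀ % d then (1:ℕ) else 0) := by
    intro a; rw [Finset.card_filter]
  have hper' : ∀ r : ℤ, (if ((r + (d:ℤ)) - (e (r + d) : ℤ)) % d = j₀ % d then (1:ℕ) else 0)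
      = (if (r - (e r : ℤ)) % d = j₀ % d then (1:ℕ) else 0) := by
    intro r
    rw [hper r]
    rw [show (r + (d:ℤ) - (e r : ℤ)) = (r - (e r : ℤ)) + (d:ℤ) * 1 by ring,
      Int.add_mul_emod_self_left]
  have h0 : ((Finset.Ico (0:ℤ) ((0:ℤ) + (d:ℤ))).filter
        (fun r => (r - (e r : ℤ)) % d = j₀ % d)).card
      = ((Finset.Ico j₀ (j₀ + (d:ℤ))).filter
        (fun r => (r - (e r : ℤ)) % d = j₀ % d)).card := by
    rw [hcf, hcf]
    exact periodic_sum_Ico' d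
      (fun r => if (r - (e r : ℤ)) % d = j₀ % d then (1:ℕ) else 0) hper' 0 j₀
  have hfilter : (Finset.Ico j₀ (j₀ + (d:ℤ))).filter
        (fun r => (r - (e r : ℤ)) % d = j₀ % d)
      = (Finset.Ico j₀ (j₀ + (d:ℤ))).filter (fun k => k - (e k : ℤ) = j₀) := by
    apply Finset.filter_congr
    intro r hr
    simp only [Finset.mem_Ico] at hr
    have hb := hlt r
    constructor
    · intro h
      have hdvd : (d:ℤ) ∣ (j₀ - (r - (e r : ℤ))) := Int.ModEq.dvd h
      have := dvd_small_eq hD hdvd (by omega) (by omega)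
      omega
    · intro h; rw [h]
  rw [show ((0:ℤ) + (d:ℤ)) = (d:ℤ) by ring] at h0
  rw [h0, hfilter]

/-! ### the composition induced by a valid statistic, and the inverse property -/

section ClaimC

variable (d : ℕ) (hd : 1 ≤ d) (e : ℤ → ℕ)

/-- the composition obtained by counting starts of arcs in each residue class. -/
noncomputable def oc : Fin d → ℕ := fun j =>
  ((Finset.Ico (0:ℤ) d).filter (fun r => (r - (e r : ℤ)) % d = (j:ℤ))).card

include hd in
lemma oc_sum : ∑ j, oc d e j = d := by
  have hD : (0:ℤ) < d := by exact_mod_cast hd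
  have hmap : ∀ r : ℤ, ((r - (e r : ℤ)) % d).toNat < d := by
    intro r
    have h1 := Int.emod_nonneg (r - (e r : ℤ)) (by omega : (d:ℤ) ≠ 0)
    have h2 := Int.emod_lt_of_pos (r - (e r : ℤ)) hD
    omega
  have h := Finset.card_eq_sum_card_fiberwise
    (f := fun r : ℤ => (⟨((r - (e r : ℤ)) % d).toNat, hmap r⟩ : Fin d))
    (s := Finset.Ico (0:ℤ) d) (t := Finset.univ) (fun x _ => Finset.mem_univ _)
  have hIcoCard : (Finset.Ico (0:ℤ) d).card = d := by
    rw [Int.card_Ico]; omega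
  have hstep : ∑ j, oc d e j = ∑ j ∈ Finset.univ, ((Finset.Ico (0:ℤ) d).filter
      (fun r => (⟨((r - (e r : ℤ)) % d).toNat, hmap r⟩ : Fin d) = j)).card := by
    refine Finset.sum_congr rfl (fun j _ => ?_)
    unfold oc
    congr 1
    apply Finset.filter_congr
    intro r hr
    have h1 := Int.emod_nonneg (r - (e r : ℤ)) (by omega : (d:ℤ) ≠ 0)
    constructor
    · intro hh
      have h2 : (⟨((r - (e r : ℤ)) % d).toNat, hmap r⟩ : Fin d) = j := by
        apply Fin.ext
        simp only
        omega
      exact h2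
    · intro hh
      have h2 : ((r - (e r : ℤ)) % d).toNat = (j : ℕ) := by
        rw [Fin.ext_iff] at hh; exact hh
      omega
  rw [hstep, ← h, hIcoCard]

variable (hper : ∀ k, e (k + d) = e k)
  (hval : ∀ (k : ℤ) (t : ℕ), 1 ≤ t → t ≤ e k → e (k - t) + t ≤ e k)

include hd hper hval in
/-- claim (c) : the `eo` built from the induced composition recovers `e`. -/
lemma eo_oc_eq (k : ℤ) : eo d hd (oc d e) (oc_sum d hd e) k = e k := by
  have hD : (0:ℤ) < d := by exact_mod_cast hd
  have hlt : ∀ j, e j < d := e_lt hd hper hval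
  -- Step A : Oof of the induced composition counts arc starts
  have stepA : ∀ i : ℤ, Oof d hd (oc d e) i
      = ((Finset.Ico i (i + (d:ℤ))).filter (fun r => r - (e r : ℤ) = i)).card := by
    intro i
    have h1 : Oof d hd (oc d e) i
        = ((Finset.Ico (0:ℤ) d).filter
            (fun r => (r - (e r : ℤ)) % d = ((((i % (d:ℤ)).toNat : ℕ)) : ℤ))).card := rfl
    have h2 : ((((i % (d:ℤ)).toNat : ℕ)) : ℤ) = i % d := by
      have := Int.emod_nonneg i (by omega : (d:ℤ) ≠ 0)
      omega
    rw [h1]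
    have h3 : (Finset.filter (fun r => (r - (e r : ℤ)) % d = ((((i % (d:ℤ)).toNat : ℕ)) : ℤ))
          (Finset.Ico (0:ℤ) d))
        = (Finset.filter (fun r => (r - (e r : ℤ)) % d = i % d) (Finset.Ico (0:ℤ) d)) := by
      apply Finset.filter_congr
      intro r _
      rw [h2]
    rw [h3]
    exact count_window d hd e hper hlt i
  -- Step B : the sum over an interval counts arcs starting in it
  have stepB : ∀ t : ℕ, (∑ i ∈ Finset.Icc (k - (t:ℤ)) k, (Oof d hd (oc d e) i))
      = ((Finset.Icc (k - (t:ℤ)) (k + (d:ℤ) - 1)).filter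
          (fun x => k - (t:ℤ) ≤ x - (e x : ℤ) ∧ x - (e x : ℤ) ≤ k)).card := by
    intro t
    set K := (Finset.Icc (k - (t:ℤ)) (k + (d:ℤ) - 1)).filter
        (fun x => k - (t:ℤ) ≤ x - (e x : ℤ) ∧ x - (e x : ℤ) ≤ k) with hK
    have hfib := Finset.card_eq_sum_card_fiberwise
      (f := fun x : ℤ => x - (e x : ℤ)) (s := K) (t := Finset.Icc (k - (t:ℤ)) k)
      (by
        intro x hx
        simp only [Finset.mem_coe, hK, Finset.mem_filter] at hx
        simp only [Finset.mem_coe, Finset.mem_Icc]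
        exact hx.2)
    rw [hfib]
    refine Finset.sum_congr rfl (fun i hi => ?_)
    simp only [Finset.mem_Icc] at hi
    rw [stepA i]
    congr 1
    ext x
    simp only [hK, Finset.mem_filter, Finset.mem_Icc, Finset.mem_Ico]
    have := hlt x
    omega
  -- (i) : Pm holds at e k
  have hPek : Pm d hd (oc d e) k (e k) := by
    unfold Pm
    have hB := stepB (e k)
    have hsub : Finset.Icc (k - (e k:ℤ)) k ⊆ (Finset.Icc (k - (e k:ℤ)) (k + (d:ℤ) - 1)).filter
        (fun x => k - (e k:ℤ) ≤ x - (e x : ℤ) ∧ x - (e x : ℤ) ≤ k) := by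
      intro x hx
      simp only [Finset.mem_Icc] at hx
      simp only [Finset.mem_filter, Finset.mem_Icc]
      have hex := hlt x
      refine ⟨⟨hx.1, by omega⟩, ?_, by omega⟩
      rcases eq_or_lt_of_le hx.2 with h | h
      · rw [h]
      · have ht' : 1 ≤ (k - x).toNat ∧ (k - x).toNat ≤ e k := by omega
        have h4 := hval k ((k - x).toNat) ht'.1 ht'.2
        rw [show (k - (((k - x).toNat : ℕ) : ℤ)) = x by omega] at h4
        omega
    have hcardsub := Finset.card_le_card hsub
    have hcardIcc : (Finset.Icc (k - (e k:ℤ)) k).card = e k + 1 := by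
      rw [Int.card_Icc]; omega
    have hcast : (∑ i ∈ Finset.Icc (k - ((e k:ℕ):ℤ)) k, (Oof d hd (oc d e) i : ℤ))
        = ((∑ i ∈ Finset.Icc (k - ((e k:ℕ):ℤ)) k, (Oof d hd (oc d e) i) : ℕ) : ℤ) := by
      push_cast; rfl
    rw [hcast]
    have := stepB (e k)
    omega
  -- (ii) : Pm fails below e k
  have hPfail : ∀ t : ℕ, t < e k → ¬ Pm d hd (oc d e) k t := by
    intro t ht
    unfold Pm
    have hB := stepB t
    have hsub : (Finset.Icc (k - (t:ℤ)) (k + (d:ℤ) - 1)).filter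
        (fun x => k - (t:ℤ) ≤ x - (e x : ℤ) ∧ x - (e x : ℤ) ≤ k)
        ⊆ Finset.Icc (k - (t:ℤ)) (k - 1) := by
      intro x hx
      simp only [Finset.mem_filter, Finset.mem_Icc] at hx
      obtain ⟨⟨hx1, hx2⟩, hx3, hx4⟩ := hx
      simp only [Finset.mem_Icc]
      have hex := hlt x
      refine ⟨by omega, ?_⟩
      by_contra hc
      push_neg at hc
      have hcase : x = k ∨ k < x := by omega
      rcases hcase with h | h
      · subst h
        omega
      · -- x > k
        have ht'' : 1 ≤ (x - k).toNat ∧ (x - k).toNat ≤ e x := by omega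
        have h4 := hval x ((x - k).toNat) ht''.1 ht''.2
        rw [show (x - (((x - k).toNat : ℕ) : ℤ)) = k by omega] at h4
        omega
    have hcardsub := Finset.card_le_card hsub
    have hcardIcc : (Finset.Icc (k - (t:ℤ)) (k - 1)).card = t := by
      rw [Int.card_Icc]; omega
    have hcast : (∑ i ∈ Finset.Icc (k - ((t:ℕ):ℤ)) k, (Oof d hd (oc d e) i : ℤ))
        = ((∑ i ∈ Finset.Icc (k - ((t:ℕ):ℤ)) k, (Oof d hd (oc d e) i) : ℕ) : ℤ) := by
      push_cast; rfl
    rw [hcast]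
    omega
  apply le_antisymm
  · exact Nat.find_le (h := Pm_exists d hd (oc d e) (oc_sum d hd e) k) hPek
  · by_contra hc
    push_neg at hc
    exact hPfail _ hc (eo_spec d hd (oc d e) (oc_sum d hd e) k)

end ClaimC

/-! ### final assembly -/

lemma PEquiv_congr {d : ℕ} {e₁ e₂ : ℤ → ℕ} (h : e₁ = e₂) (hd : 1 ≤ d)
    (hper₁ : ∀ k, e₁ (k + d) = e₁ k)
    (hval₁ : ∀ (k : ℤ) (t : ℕ), 1 ≤ t → t ≤ e₁ k → e₁ (k - t) + t ≤ e₁ k)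
    (hper₂ : ∀ k, e₂ (k + d) = e₂ k)
    (hval₂ : ∀ (k : ℤ) (t : ℕ), 1 ≤ t → t ≤ e₂ k → e₂ (k - t) + t ≤ e₂ k) :
    PEquiv (e := e₁) hd hper₁ hval₁ = PEquiv (e := e₂) hd hper₂ hval₂ := by
  subst h
  rfl

lemma multiset_card_sum {α β : Type*} [DecidableEq β] (s : Finset β) (f : β → Multiset α) :
    Multiset.card (∑ j ∈ s, f j) = ∑ j ∈ s, Multiset.card (f j) := by
  induction s using Finset.induction with
  | empty => simp
  | insert a s hx ih =>
      rw [Finset.sum_insert hx, Finset.sum_insert hx, Multiset.card_add, ih]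

/-- stars and bars : `{f : Fin d → ℕ // ∑ f = d} ≃ Sym (Fin d) d`. -/
noncomputable def compEquivSym (d : ℕ) : {f : Fin d → ℕ // ∑ j, f j = d} ≃ Sym (Fin d) d where
  toFun := fun x => ⟨∑ j, Multiset.replicate (x.1 j) j, by
    rw [multiset_card_sum]
    simp only [Multiset.card_replicate]
    exact x.2⟩
  invFun := fun m => ⟨fun j => m.1.count j, by
    have h2 : ∑ j : Fin d, m.1.count j = ∑ j ∈ m.1.toFinset, m.1.count j :=
      (Finset.sum_subset (Finset.subset_univ _) (fun x _ hx => by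
        rw [Multiset.count_eq_zero]
        simpa using hx)).symm
    rw [h2, Multiset.toFinset_sum_count_eq]
    exact m.2⟩
  left_inv := by
    rintro ⟨f, hf⟩
    apply Subtype.ext
    funext j
    simp only
    rw [Multiset.count_sum']
    have : ∀ i : Fin d, Multiset.count j (Multiset.replicate (f i) i)
        = if i = j then f i else 0 := by
      intro i
      rw [Multiset.count_replicate]
    rw [Finset.sum_congr rfl (fun i _ => this i), Finset.sum_ite_eq' Finset.univ j f]
    simp
  right_inv := by
    rintro ⟨m, hm⟩
    apply Subtype.ext
    simp only
    have h2 : ∀ j : Fin d, Multiset.replicate (m.count j) j = m.count j • {j} :=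
      fun j => (Multiset.nsmul_singleton _ _).symm
    rw [Finset.sum_congr rfl (fun j _ => h2 j)]
    rw [← Finset.sum_subset (Finset.subset_univ m.toFinset) (fun x _ hx => by
      rw [Multiset.count_eq_zero_of_notMem (by simpa using hx), zero_smul])]
    exact Multiset.toFinset_sum_count_nsmul_eq m

lemma card_comp (d : ℕ) (hd : 1 ≤ d) :
    Nat.card {f : Fin d → ℕ // ∑ j, f j = d} = (2 * d - 1).choose d := by
  rw [Nat.card_congr (compEquivSym d), Nat.card_eq_fintype_card, Sym.card_sym_eq_choose]
  congr 1
  rw [Fintype.card_fin]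
  omega

theorem main_count (d : ℕ) (hd : 1 ≤ d) :
    Nat.card {π : ℤ ≃ ℤ // IsAffinePerm d π ∧ Avoids312Z π} = (2 * d - 1).choose d := by
  rw [← card_comp d hd]
  apply Nat.card_congr
  apply Equiv.symm
  apply Equiv.ofBijective (f := fun (x : {f : Fin d → ℕ // ∑ j, f j = d}) =>
    (⟨PEquiv hd (eo_per d hd x.1 x.2) (eo_valid d hd x.1 x.2),
      PEquiv_affine hd (eo_per d hd x.1 x.2) (eo_valid d hd x.1 x.2),
      PEquiv_avoids hd (eo_per d hd x.1 x.2) (eo_valid d hd x.1 x.2)⟩ :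
      {π : ℤ ≃ ℤ // IsAffinePerm d π ∧ Avoids312Z π}))
  constructor
  · -- injective
    rintro ⟨o₁, ho₁⟩ ⟨o₂, ho₂⟩ heq
    simp only [Subtype.mk_eq_mk] at heq
    have he : ∀ k : ℤ, eo d hd o₁ ho₁ k = eo d hd o₂ ho₂ k := by
      intro k
      have h1 := estat_PEquiv hd (eo_per d hd o₁ ho₁) (eo_valid d hd o₁ ho₁) k
      have h2 := estat_PEquiv hd (eo_per d hd o₂ ho₂) (eo_valid d hd o₂ ho₂) k
      rw [← h1, ← h2, heq]
    apply Subtype.ext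
    funext j
    have h1 := count_eo_window d hd o₁ ho₁ (j : ℤ) (by positivity) (by exact_mod_cast j.2)
    have h2 := count_eo_window d hd o₂ ho₂ (j : ℤ) (by positivity) (by exact_mod_cast j.2)
    rw [Oof_at] at h1 h2
    show o₁ j = o₂ j
    rw [← h1, ← h2]
    congr 1
    apply Finset.filter_congr
    intro k _
    rw [he k]
  · -- surjective
    rintro ⟨π, haff, hav⟩
    set e : ℤ → ℕ := fun k => estat d π k with hedef
    have hper : ∀ k, e (k + d) = e k := fun k => estat_per hd haff hav k
    have hval : ∀ (k : ℤ) (t : ℕ), 1 ≤ t → t ≤ e k → e (k - t) + t ≤ e k :=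
      fun k t h1 h2 => estat_valid hd haff hav k t h1 h2
    refine ⟨⟨oc d e, oc_sum d hd e⟩, ?_⟩
    apply Subtype.ext
    simp only
    have hc : (fun k => eo d hd (oc d e) (oc_sum d hd e) k) = e :=
      funext (fun k => eo_oc_eq d hd e hper hval k)
    have h3 : PEquiv hd (eo_per d hd (oc d e) (oc_sum d hd e))
        (eo_valid d hd (oc d e) (oc_sum d hd e)) = PEquiv hd hper hval :=
      PEquiv_congr hc hd _ _ _ _
    rw [h3]
    exact (avoider_eq_PEquiv hd haff hav).symm

end CritesProof

/-- (Crites) The number of 312-avoiding affine permutationsin `S̃_d`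
is `binomial (2d-1) d`. -/
theorem card_312_avoiding_affine (d : ℕ) (hd : 1 ≤ d) :
    Nat.card {π : ℤ ≃ ℤ // IsAffinePerm d π ∧ Avoids312Z π} = (2 * d - 1).choose d :=
  CritesProof.main_count d hd
end

section
/- Every 312-avoiding affine permutation in the affine symmetric group on d letters has at least one cut point. -/
/-- `j` is a cut point of `π : ℤ → ℤ` if `π i < π k` for all `i ≤ j < k`. -/
def IsCutPointZ (π : ℤ ≃ ℤ) (j : ℤ) : Prop :=
  ∀ i k : ℤ, i ≤ j → j < k → π i < π k

/-- Every 312-avoiding affine permutation in `S̃_d` has a cut point. -/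
theorem affine_312_avoiding_has_cut_point (d : ℕ) (hd : 1 ≤ d) (π : ℤ ≃ ℤ)
    (h₁ : IsAffinePerm d π) (h₂ : Avoids312Z π) :
    ∃ j : ℤ, IsCutPointZ π j := by
  by_contra hno
  push_neg at hno
  have hdpos : (0:ℤ) < (d:ℤ) := by exact_mod_cast hd
  -- Every integer is crossed by an inversion.
  have hcross : ∀ j : ℤ, ∃ a b : ℤ, a ≤ j ∧ j < b ∧ π b < π a := by
    intro j
    have h := hno j
    simp only [IsCutPointZ] at h
    push_neg at h
    obtain ⟨a, b, ha, hb, hle⟩ := h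
    refine ⟨a, b, ha, hb, lt_of_le_of_ne hle ?_⟩
    intro h
    have : b = a := π.injective h
    omega
  -- Periodicity in both directions.
  have hper : ∀ (r : ℤ) (q : ℤ), π (r + q * d) = π r + q * d := by
    intro r q
    induction q using Int.induction_on with
    | zero => simp
    | succ n ih =>
        have h := h₁.1 (r + (n : ℤ) * d)
        have : r + ((n : ℤ) + 1) * d = (r + (n : ℤ) * d) + d := by ring
        rw [this, h, ih]; ring
    | pred n ih =>
        have h := h₁.1 (r + (-(n : ℤ) - 1) * d)
        have e : (r + (-(n : ℤ) - 1) * d) + d = r + (-(n : ℤ)) * d := by ring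
        rw [e] at h
        rw [ih] at h
        have e2 : r + (-((n : ℤ) + 1)) * (d : ℤ) = r + (-(n : ℤ) - 1) * (d : ℤ) := by ring
        rw [show (-((n : ℤ) + 1)) * (d : ℤ) = (-(n : ℤ) - 1) * (d : ℤ) from by ring] at *
        linarith
  -- Lower bound: π i ≥ i - C.
  obtain ⟨C, hC⟩ : ∃ C : ℤ, ∀ i : ℤ, i - C ≤ π i := by
    have hne : ((Finset.range d).image (fun r : ℕ => (r : ℤ) - π r)).Nonempty :=
      (Finset.nonempty_range_iff.mpr (by omega)).image _
    refine ⟨((Finset.range d).image (fun r : ℕ => (r : ℤ) - π r)).max' hne, fun i => ?_⟩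
    have hr0 : 0 ≤ i % (d : ℤ) := Int.emod_nonneg i (by omega)
    have hrd : i % (d : ℤ) < d := Int.emod_lt_of_pos i hdpos
    have hrt : (((i % (d : ℤ)).toNat : ℤ)) = i % (d : ℤ) := Int.toNat_of_nonneg hr0
    have hsplit : i = (((i % (d : ℤ)).toNat : ℤ)) + (i / d) * d := by
      rw [hrt]; have := Int.emod_add_ediv_mul i (d : ℤ); linarith
    have hpi : π i = π (((i % (d : ℤ)).toNat : ℤ)) + (i / d) * d := by
      conv_lhs => rw [hsplit]
      exact hper _ (i / d)
    have hmem : (((i % (d : ℤ)).toNat : ℤ)) - π (((i % (d : ℤ)).toNat : ℤ)) ∈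
        (Finset.range d).image (fun r : ℕ => (r : ℤ) - π r) := by
      refine Finset.mem_image.mpr ⟨(i % (d : ℤ)).toNat, Finset.mem_range.mpr ?_, rfl⟩
      omega
    have hle := Finset.le_max' _ _ hmem
    linarith
  -- Key step: values strictly decrease somewhere to the right.
  have key : ∀ b : ℤ, ∃ b' : ℤ, b < b' ∧ π b' < π b := by
    intro b
    obtain ⟨a', b', ha', hb', hinv⟩ := hcross b
    refine ⟨b', hb', ?_⟩
    by_contra hge
    push_neg at hge
    have hne : b ≠ b' := by omega
    have h1 : π b < π b' := lt_of_le_of_ne hge (fun h => hne (π.injective h))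
    have ha'b : a' ≠ b := by
      intro h; subst h; exact absurd hinv (not_lt.mpr hge)
    exact h₂ ⟨a', b, b', by omega, hb', h1, hinv⟩
  -- Iterate to get a contradiction with the lower bound.
  have chain : ∀ n : ℕ, ∃ b : ℤ, (n : ℤ) ≤ b ∧ π b ≤ π 0 - n := by
    intro n
    induction n with
    | zero => exact ⟨0, by simp, by simp⟩
    | succ m ih =>
        obtain ⟨b, hb1, hb2⟩ := ih
        obtain ⟨b', hb'1, hb'2⟩ := key b
        exact ⟨b', by push_cast; omega, by push_cast; omega⟩
  obtain ⟨b, hb1, hb2⟩ := chain ((π 0 + C).toNat + 1)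
  have := hC b
  push_cast at hb1 hb2
  omega
end
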